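/- Every doubly threshold graph is chordal: every cycle of length at least four in a DT graph has a chord. Equivalently, DT graphs contain no induced cycle of length ≥ 4. -/

import Mathlib

def IsDTGraph {V : Type*} (G : SimpleGraph V) (α β : ℝ) (w : V → ℝ) : Prop :=
  0 < β ∧ β ≤ α ∧ (∀ i, 0 < w i) ∧
    ∀ i j : V, i ≠ j → (G.Adj i j ↔ α ≤ w i + w j ∧ |w i - w j| ≤ β)

/-- DT graphs are chordal: they contain no induced cycle of length at least four,
i.e. there is no graph embedding (induced-subgraph embedding) of the cycle graph
on `n ≥ 4` vertices into a DT graph. -/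
theorem stmt_7 {V : Type*} (G : SimpleGraph V)
    (hDT : ∃ (α β : ℝ) (w : V → ℝ), IsDTGraph G α β w) :
    ∀ n : ℕ, 4 ≤ n → IsEmpty (SimpleGraph.cycleGraph n ↪g G) := by
  obtain ⟨α, β, w, hβ, hβα, hw, hadj⟩ := hDT
  rintro n hn
  obtain ⟨m, rfl⟩ : ∃ m, n = m + 4 := ⟨n - 4, by omega⟩
  constructor
  intro f
  -- pick a vertex of minimal weight on the cycle
  obtain ⟨k, -, hk⟩ := Finset.exists_min_image (Finset.univ : Finset (Fin (m + 4)))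
    (fun i => w (f i)) ⟨0, Finset.mem_univ 0⟩
  simp only [Finset.mem_univ, forall_true_left] at hk
  have hmod2 : (2 : ℕ) % (m + 4) = 2 := Nat.mod_eq_of_lt (by omega)
  -- k-1 and k+1 differ by 2, hence are distinct and nonadjacent in the cycle
  have hsub : (k + 1) - (k - 1) = 2 := by open Fin.CommRing in ring
  have hsub' : (k - 1) - (k + 1) = -2 := by open Fin.CommRing in ring
  have hval2 : ((2 : Fin (m + 4)) : ℕ) = 2 := by
    simp [Fin.coe_ofNat_eq_mod, hmod2]
  have hne : (k - 1 : Fin (m + 4)) ≠ k + 1 := by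
    intro h
    have : (k + 1) - (k - 1) = 0 := by rw [h]; open Fin.CommRing in ring
    rw [hsub] at this
    have := congrArg Fin.val this
    simp [hval2, hmod2] at this
  -- k is adjacent to k-1 and k+1 in the cycle
  have hadj1 : (SimpleGraph.cycleGraph (m + 4)).Adj k (k - 1) := by
    rw [SimpleGraph.cycleGraph_adj]
    left; open Fin.CommRing in ring_nf
  have hadj2 : (SimpleGraph.cycleGraph (m + 4)).Adj k (k + 1) := by
    rw [SimpleGraph.cycleGraph_adj]
    right; open Fin.CommRing in ring_nf
  -- transfer to G
  have g1 := f.map_adj_iff.mpr hadj1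
  have g2 := f.map_adj_iff.mpr hadj2
  have hne1 : f k ≠ f (k - 1) := g1.ne
  have hne2 : f k ≠ f (k + 1) := g2.ne
  rw [hadj _ _ hne1] at g1
  rw [hadj _ _ hne2] at g2
  -- show f(k-1) ~ f(k+1)
  have hchord : G.Adj (f (k - 1)) (f (k + 1)) := by
    rw [hadj _ _ (fun h => hne (f.injective h))]
    constructor
    · calc α ≤ w (f k) + w (f (k - 1)) := g1.1
        _ ≤ w (f (k + 1)) + w (f (k - 1)) := by linarith [hk (k + 1)]
        _ = w (f (k - 1)) + w (f (k + 1)) := by ring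
    · rw [abs_le]
      have a1 := abs_le.mp g1.2
      have a2 := abs_le.mp g2.2
      have b1 := hk (k - 1)
      have b2 := hk (k + 1)
      constructor <;> linarith
  -- but k-1 and k+1 are not adjacent in the cycle, contradiction
  have := f.map_adj_iff.mp hchord
  rw [SimpleGraph.cycleGraph_adj] at this
  rcases this with h | h
  · rw [hsub'] at h
    have h3 : (3 : Fin (m + 4)) = 0 := by
      have := congrArg (· + 2) h
      simp at this
      open Fin.CommRing in linear_combination -this
    have := congrArg Fin.val h3
    rw [Fin.coe_ofNat_eq_mod] at this
    simp [Nat.mod_eq_of_lt (show (3:ℕ) < m + 4 by omega)] at this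
  · rw [hsub] at h
    have := congrArg Fin.val h
    simp [hval2, hmod2] at this
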